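/- Let A(t) be the ordinary generating function of the Riordan numbers R(n) (counting noncrossing partitions of {0,...,n-1} without singleton blocks, with R(0)=1, R(1)=0). Then A satisfies the functional equation A(t) = 1/(1+t) + t·A(t)², as an identity of formal power series. -/

import Mathlib

/-- The Riordan numbers: `R(0)=1`, `R(1)=0`, `(n+2)·R(n+1) = n·(2R(n)+3R(n-1))`. -/
def riordan : ℕ → ℚ
  | 0 => 1
  | 1 => 0
  | (n+2) => ((n : ℚ) + 1) * (2 * riordan (n+1) + 3 * riordan n) / ((n : ℚ) + 3)

open PowerSeries

lemma riordan_rec (n : ℕ) :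
    ((n : ℚ) + 3) * riordan (n+2) = ((n : ℚ) + 1) * (2 * riordan (n+1) + 3 * riordan n) := by
  have h3 : (n : ℚ) + 3 ≠ 0 := by positivity
  rw [show riordan (n+2)
      = ((n : ℚ) + 1) * (2 * riordan (n+1) + 3 * riordan n) / ((n : ℚ) + 3) from rfl]
  field_simp

/-- coefficients of `W = 2·X·A - 1`. -/
def wseq : ℕ → ℚ
  | 0 => -1
  | (n+1) => 2 * riordan n

noncomputable def Wr : ℚ⟦X⟧ := PowerSeries.mk wseq

lemma Wr_eq : Wr = 2 * PowerSeries.X * PowerSeries.mk riordan - 1 := by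
  ext n
  rw [show (2 : ℚ⟦X⟧) * X * mk riordan - 1 = (mk riordan * X + mk riordan * X) - 1 from by ring]
  cases n with
  | zero =>
      simp [Wr, wseq, coeff_zero_eq_constantCoeff, map_sub, map_add, map_mul]
  | succ m =>
      simp [Wr, wseq, map_sub, map_add, coeff_succ_mul_X, coeff_one, two_mul]

lemma Wr_ode : (1 - 2*X - 3*X^2) * (d⁄dX ℚ Wr) = -(2*Wr) := by
  rw [show (1 - 2*X - 3*X^2) * (d⁄dX ℚ Wr)
      = d⁄dX ℚ Wr - (d⁄dX ℚ Wr * X + d⁄dX ℚ Wr * X)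
        - ((d⁄dX ℚ Wr * X) * X + (d⁄dX ℚ Wr * X) * X + (d⁄dX ℚ Wr * X) * X) from by ring,
     show -(2*Wr) = -(Wr + Wr) from by ring]
  ext n
  match n with
  | 0 =>
      simp [map_sub, map_add, map_neg, coeff_zero_eq_constantCoeff, coeff_derivative,
        Wr, wseq, riordan]
      norm_num
  | 1 =>
      simp [map_sub, map_add, map_neg, coeff_succ_mul_X, coeff_derivative,
        Wr, wseq, riordan, coeff_zero_eq_constantCoeff]
  | (m+2) =>
      simp only [map_sub, map_add, map_neg, coeff_succ_mul_X, coeff_derivative,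
        Wr, coeff_mk, wseq]
      push_cast
      linear_combination 2 * riordan_rec m

noncomputable def Pr : ℚ⟦X⟧ := (1 + X) * Wr^2 - (1 - 3*X)

lemma Pr_deriv : d⁄dX ℚ Pr = Wr^2 + (1+X) * (2 * Wr * d⁄dX ℚ Wr) + 3 := by
  have h3 : d⁄dX ℚ ((3:ℚ⟦X⟧)) = 0 := by
    rw [(map_ofNat (C (R := ℚ)) 3).symm, derivative_C]
  rw [show Pr = (1 + X) * (Wr * Wr) - 1 + 3 * X from by rw [Pr]; ring]
  rw [map_add, map_sub, Derivation.leibniz, Derivation.leibniz, Derivation.leibniz,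
    map_add, Derivation.map_one_eq_zero, derivative_X, h3]
  try simp only [smul_eq_mul]
  ring

lemma Pr_ode : (1 - 3*X) * (d⁄dX ℚ Pr) + 3 * Pr = 0 := by
  have h2 : (1+X) * ((1 - 3*X) * (d⁄dX ℚ Pr) + 3 * Pr) = 0 := by
    rw [Pr_deriv]
    simp only [Pr]
    linear_combination (2*(1+X)*Wr) * Wr_ode
  rcases mul_eq_zero.mp h2 with h | h
  · exfalso
    have := congrArg (constantCoeff (R := ℚ)) h
    simp at this
  · exact h

lemma Pr_coeff_zero : (coeff 0) Pr = 0 := by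
  simp [Pr, coeff_zero_eq_constantCoeff, map_sub, map_add, map_mul, map_pow, Wr, wseq]

lemma Pr_eq_zero : Pr = 0 := by
  have h4 : d⁄dX ℚ Pr - (d⁄dX ℚ Pr * X + d⁄dX ℚ Pr * X + d⁄dX ℚ Pr * X) + (Pr + Pr + Pr) = 0 := by
    linear_combination Pr_ode
  have key : ∀ n, coeff n Pr = 0 := by
    intro n
    induction n with
    | zero => exact Pr_coeff_zero
    | succ n ih =>
      have h := congrArg (coeff n) h4
      have hx : coeff n (d⁄dX ℚ Pr * X) = 0 := by
        cases n with
        | zero => simp [coeff_zero_eq_constantCoeff]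
        | succ m => rw [coeff_succ_mul_X, coeff_derivative, ih, zero_mul]
      simp only [map_add, map_sub, hx, ih, coeff_derivative, map_zero, add_zero,
        zero_add, sub_zero] at h
      have hne : ((n:ℚ) + 1) ≠ 0 := by positivity
      have h' : coeff (n+1) Pr * ((n:ℚ)+1) = 0 := by linarith
      exact (mul_eq_zero.mp h').resolve_right hne
  ext n
  rw [key n, map_zero]

/-- The generating function `A(t) = ∑ R(n) tⁿ` of the Riordan numbers satisfies
`A = 1/(1+t) + t·A²` in `ℚ[[t]]`. -/
theorem riordan_gf_functional_equation :
    (PowerSeries.mk riordan : PowerSeries ℚ) =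
      (1 + PowerSeries.X)⁻¹ + PowerSeries.X * (PowerSeries.mk riordan)^2 := by
  have hW2 : (1+X) * Wr^2 = 1 - 3*X := by
    have h := Pr_eq_zero
    rw [Pr, sub_eq_zero] at h
    exact h
  rw [Wr_eq] at hW2
  have h5 : (4*X) * ((1+X)*X*(mk riordan)^2 - (1+X)*(mk riordan) + 1) = (0 : ℚ⟦X⟧) := by
    linear_combination hW2
  have h4ne : (4 * X : ℚ⟦X⟧) ≠ 0 := by
    refine mul_ne_zero ?_ X_ne_zero
    intro h
    have := congrArg (constantCoeff (R := ℚ)) h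
    norm_num [map_ofNat] at this
  have h6 : (1+X)*X*(mk riordan)^2 - (1+X)*(mk riordan) + 1 = (0 : ℚ⟦X⟧) :=
    (mul_eq_zero.mp h5).resolve_left h4ne
  have hne : (1 + X : ℚ⟦X⟧) ≠ 0 := by
    intro h
    have := congrArg (constantCoeff (R := ℚ)) h
    simp at this
  have hu : (1 + X : ℚ⟦X⟧) * (1+X)⁻¹ = 1 :=
    PowerSeries.mul_inv_cancel _ (by simp)
  apply mul_left_cancel₀ hne
  rw [mul_add, hu]
  linear_combination (-1 : ℚ⟦X⟧) * h6
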